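/- Let Y₁, ..., Y_m be independent Bernoullis with parameters p₁, ..., p_m, and values v₁, ..., v_m ≥ 0. Then E[max_s Y_s v_s] ≥ Σ_{s} P(Y_s = 1) v_s − Σ_{s < s'} P(Y_s = 1) P(Y_{s'} = 1) max(v_s, v_{s'}). -/
import Mathlib

open Finset


/-- Expected value of `max_{s ∈ A} v s` (with `max ∅ = 0`) where each index `s`
is included in `A` independently with probability `p s`. -/
noncomputable def expectedMax {m : ℕ} (p v : Fin m → ℝ) : ℝ :=
  ∑ A : Finset (Fin m),
    (∏ s ∈ A, p s) * (∏ s ∈ Aᶜ, (1 - p s)) * (A.fold max 0 v)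

namespace EMaux

variable {m : ℕ}

noncomputable def w (p : Fin m → ℝ) (A : Finset (Fin m)) : ℝ :=
  (∏ s ∈ A, p s) * (∏ s ∈ Aᶜ, (1 - p s))

lemma w_nonneg (p : Fin m → ℝ) (hp0 : ∀ s, 0 ≤ p s) (hp1 : ∀ s, p s ≤ 1)
    (A : Finset (Fin m)) : 0 ≤ w p A :=
  mul_nonneg (prod_nonneg fun s _ => hp0 s) (prod_nonneg fun s _ => by linarith [hp1 s])

lemma wsum (p : Fin m → ℝ) (S : Finset (Fin m)) :
    ∑ A : Finset (Fin m), (if S ⊆ A then w p A else 0) = ∏ s ∈ S, p s := by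
  classical
  rw [Finset.sum_ite, Finset.sum_const_zero, add_zero]
  have key : ∑ A ∈ Finset.univ.filter (fun A => S ⊆ A), w p A
      = ∑ B ∈ Sᶜ.powerset, (∏ s ∈ S, p s) * ((∏ s ∈ B, p s) * ∏ s ∈ Sᶜ \ B, (1 - p s)) := by
    refine Finset.sum_nbij' (fun A => A \ S) (fun B => S ∪ B) ?_ ?_ ?_ ?_ ?_
    · intro A hA
      simp only [mem_filter, mem_univ, true_and] at hA
      simp only [mem_powerset]
      intro x hx
      simp only [mem_sdiff] at hx
      simp [mem_compl, hx.2]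
    · intro B hB
      simp
    · intro A hA
      simp only [mem_filter, mem_univ, true_and] at hA
      exact Finset.union_sdiff_of_subset hA
    · intro B hB
      simp only [mem_powerset] at hB
      show (S ∪ B) \ S = B
      rw [Finset.union_sdiff_cancel_left]
      rw [Finset.disjoint_left]
      intro x hxS hxB
      have := hB hxB
      simp only [mem_compl] at this
      exact this hxS
    · intro A hA
      simp only [mem_filter, mem_univ, true_and] at hA
      have h1 : (∏ s ∈ A, p s) = (∏ s ∈ S, p s) * ∏ s ∈ A \ S, p s := by
        rw [mul_comm, Finset.prod_sdiff hA]
      have h2 : Aᶜ = Sᶜ \ (A \ S) := by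
        ext x
        simp only [mem_compl, mem_sdiff]
        constructor
        · intro hx
          exact ⟨fun hxS => hx (hA hxS), fun h => hx h.1⟩
        · rintro ⟨hxS, hx⟩ hxA
          exact hxS (by tauto)
      rw [w, h1, h2]
      ring
  rw [key, ← Finset.mul_sum, ← Finset.prod_add]
  simp

/-- pointwise inclusion-exclusion bound -/
lemma fold_ge (v : Fin m → ℝ) (hv0 : ∀ s, 0 ≤ v s) (A : Finset (Fin m)) :
    (∑ s ∈ A, v s) -
      (∑ s ∈ A, ∑ s' ∈ A.filter (fun s' => s < s'), max (v s) (v s'))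
      ≤ A.fold max 0 v := by
  classical
  induction A using Finset.induction_on with
  | empty => simp
  | @insert a A ha ih =>
    rw [Finset.fold_insert ha, Finset.sum_insert ha, Finset.sum_insert ha]
    have hfilter : (insert a A).filter (fun s' => a < s') = A.filter (fun s' => a < s') := by
      rw [Finset.filter_insert, if_neg (lt_irrefl a)]
    rw [hfilter]
    have hinner : ∀ s ∈ A, (∑ s' ∈ (insert a A).filter (fun s' => s < s'), max (v s) (v s'))
        = (if s < a then max (v s) (v a) else 0)
          + ∑ s' ∈ A.filter (fun s' => s < s'), max (v s) (v s') := by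
      intro s hs
      rw [Finset.filter_insert]
      by_cases h : s < a
      · rw [if_pos h, if_pos h, Finset.sum_insert (by simp [ha])]
      · rw [if_neg h, if_neg h, zero_add]
    rw [Finset.sum_congr rfl hinner, Finset.sum_add_distrib]
    have hextra : (∑ s' ∈ A.filter (fun s' => a < s'), max (v a) (v s'))
        + ∑ s ∈ A, (if s < a then max (v s) (v a) else 0)
        = ∑ s ∈ A, max (v a) (v s) := by
      rw [Finset.sum_filter, ← Finset.sum_add_distrib]
      refine Finset.sum_congr rfl fun s hs => ?_
      have hne : s ≠ a := fun h => ha (h ▸ hs)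
      rcases lt_trichotomy a s with h | h | h
      · rw [if_pos h, if_neg (asymm h), add_zero]
      · exact absurd h.symm hne
      · rw [if_neg (asymm h), if_pos h, zero_add, max_comm]
    rcases Finset.eq_empty_or_nonempty A with rfl | ⟨s₀, hs₀⟩
    · simp [le_max_left]
    · have hsum_ge : min (v a) (A.fold max 0 v) ≤ ∑ s ∈ A, max (v a) (v s) :=
        calc min (v a) (A.fold max 0 v) ≤ v a := min_le_left _ _
        _ ≤ max (v a) (v s₀) := le_max_left _ _
        _ ≤ ∑ s ∈ A, max (v a) (v s) :=
            Finset.single_le_sum (fun s _ => le_max_of_le_left (hv0 a)) hs₀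
      have hminmax : min (v a) (A.fold max 0 v) + max (v a) (A.fold max 0 v)
          = v a + A.fold max 0 v := min_add_max _ _
      linarith [hextra, ih]

lemma first_moment (p v : Fin m → ℝ) :
    ∑ A : Finset (Fin m), w p A * ∑ s ∈ A, v s = ∑ s, p s * v s := by
  classical
  have step : ∀ A : Finset (Fin m), w p A * ∑ s ∈ A, v s
      = ∑ s, (if s ∈ A then w p A * v s else 0) := by
    intro A
    rw [Finset.sum_ite_mem, Finset.univ_inter, Finset.mul_sum]
  rw [Finset.sum_congr rfl fun A _ => step A, Finset.sum_comm]
  refine Finset.sum_congr rfl fun s _ => ?_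
  have hws := wsum p {s}
  simp only [Finset.singleton_subset_iff, Finset.prod_singleton] at hws
  calc ∑ A : Finset (Fin m), (if s ∈ A then w p A * v s else 0)
      = (∑ A : Finset (Fin m), (if s ∈ A then w p A else 0)) * v s := by
        rw [Finset.sum_mul]
        exact Finset.sum_congr rfl fun A _ => by split <;> simp
    _ = p s * v s := by rw [hws]

lemma second_moment (p v : Fin m → ℝ) :
    ∑ A : Finset (Fin m),
        w p A * ∑ s ∈ A, ∑ s' ∈ A.filter (fun s' => s < s'), max (v s) (v s')
      = ∑ s, ∑ s' ∈ Finset.univ.filter (fun s' => s < s'),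
          p s * p s' * max (v s) (v s') := by
  classical
  have step : ∀ A : Finset (Fin m),
      w p A * ∑ s ∈ A, ∑ s' ∈ A.filter (fun s' => s < s'), max (v s) (v s')
      = ∑ s, ∑ s' ∈ Finset.univ.filter (fun s' => s < s'),
          (if s ∈ A ∧ s' ∈ A then w p A * max (v s) (v s') else 0) := by
    intro A
    simp_rw [Finset.mul_sum]
    have houter : ∀ s, (if s ∈ A then
          ∑ s' ∈ A.filter (fun s' => s < s'), w p A * max (v s) (v s') else 0)
        = ∑ s' ∈ Finset.univ.filter (fun s' => s < s'),
            (if s ∈ A ∧ s' ∈ A then w p A * max (v s) (v s') else 0) := by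
      intro s
      have hAf : A.filter (fun s' => s < s')
          = (Finset.univ.filter (fun s' => s < s')) ∩ A := by
        ext x; simp [and_comm]
      by_cases hs : s ∈ A
      · rw [if_pos hs, hAf, ← Finset.sum_ite_mem]
        exact Finset.sum_congr rfl fun s' _ => by
          by_cases h : s' ∈ A <;> simp [h, hs]
      · rw [if_neg hs]
        symm
        exact Finset.sum_eq_zero fun s' _ => by simp [hs]
    calc ∑ s ∈ A, ∑ s' ∈ A.filter (fun s' => s < s'), w p A * max (v s) (v s')
        = ∑ s, (if s ∈ A then
            ∑ s' ∈ A.filter (fun s' => s < s'), w p A * max (v s) (v s') else 0) := by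
          rw [Finset.sum_ite_mem, Finset.univ_inter]
      _ = _ := Finset.sum_congr rfl fun s _ => houter s
  rw [Finset.sum_congr rfl fun A _ => step A, Finset.sum_comm]
  refine Finset.sum_congr rfl fun s _ => ?_
  rw [Finset.sum_comm]
  refine Finset.sum_congr rfl fun s' hs' => ?_
  simp only [Finset.mem_filter, Finset.mem_univ, true_and] at hs'
  have hne : s ≠ s' := ne_of_lt hs'
  have hws := wsum p {s, s'}
  rw [Finset.prod_pair hne] at hws
  calc ∑ A : Finset (Fin m), (if s ∈ A ∧ s' ∈ A then w p A * max (v s) (v s') else 0)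
      = (∑ A : Finset (Fin m), (if ({s, s'} : Finset (Fin m)) ⊆ A then w p A else 0))
          * max (v s) (v s') := by
        rw [Finset.sum_mul]
        refine Finset.sum_congr rfl fun A _ => ?_
        have hiff : ({s, s'} : Finset (Fin m)) ⊆ A ↔ s ∈ A ∧ s' ∈ A := by
          simp [Finset.insert_subset_iff]
        by_cases h : s ∈ A ∧ s' ∈ A
        · rw [if_pos h, if_pos (hiff.mpr h)]
        · rw [if_neg h, if_neg (fun hh => h (hiff.mp hh)), zero_mul]
    _ = p s * p s' * max (v s) (v s') := by rw [hws]

end EMaux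

open EMaux in
theorem expectedMax_ge_inclusion_exclusion {m : ℕ} (p v : Fin m → ℝ)
    (hp0 : ∀ s, 0 ≤ p s) (hp1 : ∀ s, p s ≤ 1) (hv0 : ∀ s, 0 ≤ v s) :
    expectedMax p v ≥
      (∑ s, p s * v s) -
        ∑ s, ∑ s' ∈ Finset.univ.filter (fun s' => s < s'),
          p s * p s' * max (v s) (v s') := by
  classical
  rw [ge_iff_le, ← first_moment p v, ← second_moment p v, ← Finset.sum_sub_distrib]
  have hEM : expectedMax p v = ∑ A : Finset (Fin m), w p A * (A.fold max 0 v) := rfl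
  rw [hEM]
  refine Finset.sum_le_sum fun A _ => ?_
  rw [← mul_sub]
  exact mul_le_mul_of_nonneg_left (fold_ge v hv0 A) (w_nonneg p hp0 hp1 A)
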